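/- Let n >= 4 and let G = K_n minus the edges of a simple 4-cycle v_1 v_2 v_3 v_4. Then there exists a cyclic order of the vertices of G such that every vertex except possibly v_2 and v_4 has the consecutive-neighbors property, v_2 and v_4 are adjacent in G, and every non-edge of G is incident to a vertex with the consecutive-neighbors property. -/

import Mathlib

open SimpleGraph

/-- Clockwise distance from position `x` to position `v` in the cyclic order `ZMod n`. -/
def relpos {n : ℕ} (x v : ZMod n) : ℕ := (v - x).val

/-- `(v, v+1)` is a candidate gap for the non-edge `{x,y}` (arc taken clockwise from
`x` to `y`): the consecutive vertices `v, v+1` are non-adjacent, `[v, v+1] ⊆ [x, y]`,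
and no edge of `G` joins a vertex of `[x, v]` to a vertex of `[v+1, y]`. -/
def CandidateGap {n : ℕ} (G : SimpleGraph (ZMod n)) (x y v : ZMod n) : Prop :=
  ¬ G.Adj v (v + 1) ∧
  relpos x v < relpos x (v + 1) ∧
  relpos x (v + 1) ≤ relpos x y ∧
  ∀ u w : ZMod n, relpos x u ≤ relpos x v → relpos (v + 1) w ≤ relpos (v + 1) y →
    ¬ G.Adj u w

/-- The gap condition: every non-edge has a candidate gap (on one of its two arcs). -/
def GapCondition {n : ℕ} (G : SimpleGraph (ZMod n)) : Prop :=
  ∀ x y : ZMod n, x ≠ y → ¬ G.Adj x y →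
    ∃ v : ZMod n, CandidateGap G x y v ∨ CandidateGap G y x v

/-- Vertex `v` has the consecutive-neighbors property: its neighbors occupy
circularly consecutive positions `a, a+1, …, a+k-1`. -/
def CNP {n : ℕ} (G : SimpleGraph (ZMod n)) (v : ZMod n) : Prop :=
  ∃ (a : ZMod n) (k : ℕ), ∀ w : ZMod n,
    G.Adj v w ↔ ∃ i : ℕ, i < k ∧ w = a + (i : ZMod n)

lemma exists_lt_iff_val_lt {n : ℕ} [NeZero n] {a w : ZMod n} {k : ℕ} (hk : k ≤ n) :
    (∃ i : ℕ, i < k ∧ w = a + (i : ZMod n)) ↔ (w - a).val < k := by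
  constructor
  · rintro ⟨i, hi, rfl⟩
    rwa [add_sub_cancel_left, ZMod.val_cast_of_lt (lt_of_lt_of_le hi hk)]
  · intro h
    refine ⟨(w - a).val, h, ?_⟩
    rw [ZMod.natCast_val, ZMod.cast_id]
    ring

lemma val_lt_compl {n : ℕ} [NeZero n] {a w : ZMod n} {k : ℕ} (hk : k ≤ n) :
    (w - a).val < k ↔ ¬ ((w - (a + (k : ZMod n))).val < n - k) := by
  have ht : (w - a).val < n := ZMod.val_lt _
  set t := (w - a).val with htdef
  have hta : ((t : ℕ) : ZMod n) = w - a := by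
    rw [htdef, ZMod.natCast_val, ZMod.cast_id]
  have hw : w - (a + (k : ZMod n)) = ((t + (n - k) : ℕ) : ZMod n) := by
    push_cast [Nat.cast_sub hk]
    rw [hta, ZMod.natCast_self]
    ring
  by_cases h : t < k
  · have hlt : t + (n - k) < n := by omega
    rw [hw, ZMod.val_cast_of_lt hlt]
    omega
  · have h2 : ((t + (n - k) : ℕ) : ZMod n) = ((t - k : ℕ) : ZMod n) := by
      have he : t + (n - k) = (t - k) + n := by omega
      rw [he]
      push_cast [ZMod.natCast_self]
      ring
    rw [hw, h2, ZMod.val_cast_of_lt (by omega : t - k < n)]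
    omega

lemma cnp_of_compl {n : ℕ} [NeZero n] (G' : SimpleGraph (ZMod n)) (p a : ZMod n) (k : ℕ)
    (hk : k ≤ n) (h : ∀ w, G'.Adj p w ↔ ¬ ((w - a).val < k)) : CNP G' p := by
  refine ⟨a + (k : ZMod n), n - k, fun w => ?_⟩
  rw [h w, val_lt_compl hk, not_not]
  exact (exists_lt_iff_val_lt (Nat.sub_le n k)).symm

set_option maxHeartbeats 2000000 in
/-- For `n ≥ 4` and `G = Kₙ` minus a 4-cycle `v₁v₂v₃v₄`, there is a cyclic order such
that every vertex except possibly `v₂, v₄` has the consecutive-neighbors property,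
`v₂` and `v₄` are adjacent in `G`, and every non-edge of `G` is incident to a vertex
with the consecutive-neighbors property. -/
theorem stmt_8 {V : Type*} [Fintype V] (n : ℕ)
    (hcard : Fintype.card V = n) (hn : 4 ≤ n)
    (v : Fin 4 ↪ V) (G : SimpleGraph V)
    (hG : G = (⊤ : SimpleGraph V) \
      SimpleGraph.fromEdgeSet {s(v 0, v 1), s(v 1, v 2), s(v 2, v 3), s(v 3, v 0)}) :
    ∃ σ : V ≃ ZMod n,
      (∀ u : V, u ≠ v 1 → u ≠ v 3 → CNP (G.map σ.toEmbedding) (σ u)) ∧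
      G.Adj (v 1) (v 3) ∧
      (∀ x y : V, x ≠ y → ¬ G.Adj x y →
        ∃ p, (p = x ∨ p = y) ∧ CNP (G.map σ.toEmbedding) (σ p)) := by
  haveI : NeZero n := ⟨by omega⟩
  have hvne : ∀ i j : Fin 4, i ≠ j → v i ≠ v j := fun i j h he => h (v.injective he)
  have hnum : ∀ i j : ℕ, i < n → j < n → i ≠ j → (i : ZMod n) ≠ (j : ZMod n) := by
    intro i j hi hj hij he
    apply hij
    rw [← ZMod.val_cast_of_lt hi, he, ZMod.val_cast_of_lt hj]
  have ne01 : (0 : ZMod n) ≠ 1 := by simpa using hnum 0 1 (by omega) (by omega) (by omega)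
  have ne02 : (0 : ZMod n) ≠ 2 := by simpa using hnum 0 2 (by omega) (by omega) (by omega)
  have ne03 : (0 : ZMod n) ≠ 3 := by simpa using hnum 0 3 (by omega) (by omega) (by omega)
  have ne12 : (1 : ZMod n) ≠ 2 := by simpa using hnum 1 2 (by omega) (by omega) (by omega)
  have ne13 : (1 : ZMod n) ≠ 3 := by simpa using hnum 1 3 (by omega) (by omega) (by omega)
  have ne23 : (2 : ZMod n) ≠ 3 := by simpa using hnum 2 3 (by omega) (by omega) (by omega)
  have hcard' : Fintype.card V = Fintype.card (ZMod n) := by rw [hcard, ZMod.card]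
  obtain ⟨σ, hs0, hs1, hs3, hs2⟩ : ∃ σ : V ≃ ZMod n,
      σ (v 0) = 0 ∧ σ (v 1) = 1 ∧ σ (v 3) = 2 ∧ σ (v 2) = 3 := by
    set e0 : V ≃ ZMod n := Fintype.equivOfCardEq hcard' with he0
    set σ1 : V ≃ ZMod n := e0.trans (Equiv.swap (e0 (v 0)) 0) with hσ1
    have h10 : σ1 (v 0) = 0 := by
      rw [hσ1, Equiv.trans_apply, Equiv.swap_apply_left]
    set σ2 : V ≃ ZMod n := σ1.trans (Equiv.swap (σ1 (v 1)) 1) with hσ2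
    have h21 : σ2 (v 1) = 1 := by
      rw [hσ2, Equiv.trans_apply, Equiv.swap_apply_left]
    have h20 : σ2 (v 0) = 0 := by
      rw [hσ2, Equiv.trans_apply, h10]
      exact Equiv.swap_apply_of_ne_of_ne
        (fun h => hvne 0 1 (by decide) (σ1.injective (h10.trans h))) ne01
    set σ3 : V ≃ ZMod n := σ2.trans (Equiv.swap (σ2 (v 3)) 2) with hσ3
    have h33 : σ3 (v 3) = 2 := by
      rw [hσ3, Equiv.trans_apply, Equiv.swap_apply_left]
    have h30 : σ3 (v 0) = 0 := by
      rw [hσ3, Equiv.trans_apply, h20]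
      exact Equiv.swap_apply_of_ne_of_ne
        (fun h => hvne 0 3 (by decide) (σ2.injective (h20.trans h))) ne02
    have h31 : σ3 (v 1) = 1 := by
      rw [hσ3, Equiv.trans_apply, h21]
      exact Equiv.swap_apply_of_ne_of_ne
        (fun h => hvne 1 3 (by decide) (σ2.injective (h21.trans h))) ne12
    refine ⟨σ3.trans (Equiv.swap (σ3 (v 2)) 3), ?_, ?_, ?_, ?_⟩
    · rw [Equiv.trans_apply, h30]
      exact Equiv.swap_apply_of_ne_of_ne
        (fun h => hvne 0 2 (by decide) (σ3.injective (h30.trans h))) ne03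
    · rw [Equiv.trans_apply, h31]
      exact Equiv.swap_apply_of_ne_of_ne
        (fun h => hvne 1 2 (by decide) (σ3.injective (h31.trans h))) ne13
    · rw [Equiv.trans_apply, h33]
      exact Equiv.swap_apply_of_ne_of_ne
        (fun h => hvne 3 2 (by decide) (σ3.injective (h33.trans h))) ne23
    · rw [Equiv.trans_apply, Equiv.swap_apply_left]
  have hAdj : ∀ x y : V, G.Adj x y ↔ x ≠ y ∧
      ¬ (s(x,y) = s(v 0, v 1) ∨ s(x,y) = s(v 1, v 2) ∨ s(x,y) = s(v 2, v 3) ∨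
         s(x,y) = s(v 3, v 0)) := by
    intro x y
    rw [hG]
    simp only [SimpleGraph.sdiff_adj, SimpleGraph.top_adj, SimpleGraph.fromEdgeSet_adj,
      Set.mem_insert_iff, Set.mem_singleton_iff]
    tauto
  have mapAdj : ∀ x y : ZMod n,
      (G.map σ.toEmbedding).Adj x y ↔ G.Adj (σ.symm x) (σ.symm y) := by
    intro x y
    simp only [SimpleGraph.map_adj, Equiv.coe_toEmbedding]
    constructor
    · rintro ⟨-, a, b, h, rfl, rfl⟩
      simpa using h
    · intro h
      exact ⟨fun he => h.ne (by rw [he]), σ.symm x, σ.symm y, h, σ.apply_symm_apply x, σ.apply_symm_apply y⟩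
  have hval3 : ∀ a w : ZMod n,
      ((w - a).val < 3 ↔ (w = a ∨ w = a + 1 ∨ w = a + 2)) := by
    intro a w
    rw [← exists_lt_iff_val_lt (by omega : 3 ≤ n)]
    constructor
    · rintro ⟨i, hi, rfl⟩
      interval_cases i <;> norm_num
    · rintro (rfl | rfl | rfl)
      exacts [⟨0, by omega, by norm_num⟩, ⟨1, by omega, by norm_num⟩,
        ⟨2, by omega, by norm_num⟩]
  have hsym0 : σ.symm 0 = v 0 := by rw [Equiv.symm_apply_eq, hs0]
  have hsym3 : σ.symm 3 = v 2 := by rw [Equiv.symm_apply_eq, hs2]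
  have hw0 : ∀ w : ZMod n, σ.symm w = v 0 ↔ w = 0 := fun w => by
    rw [Equiv.symm_apply_eq, hs0]
  have hw1 : ∀ w : ZMod n, σ.symm w = v 1 ↔ w = 1 := fun w => by
    rw [Equiv.symm_apply_eq, hs1]
  have hw2 : ∀ w : ZMod n, σ.symm w = v 2 ↔ w = 3 := fun w => by
    rw [Equiv.symm_apply_eq, hs2]
  have hw3 : ∀ w : ZMod n, σ.symm w = v 3 ↔ w = 2 := fun w => by
    rw [Equiv.symm_apply_eq, hs3]
  have hCNP : ∀ u : V, u ≠ v 1 → u ≠ v 3 → CNP (G.map σ.toEmbedding) (σ u) := by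
    intro u hu1 hu3
    by_cases hu0 : u = v 0
    · subst hu0
      rw [hs0]
      apply cnp_of_compl _ _ 0 3 (by omega)
      intro w
      rw [mapAdj, hsym0, hAdj, hval3, zero_add, zero_add, ← hw0 w, ← hw1 w, ← hw3 w,
        ne_comm]
      simp only [Sym2.eq_iff, v.injective.eq_iff, Fin.reduceEq]
      tauto
    · by_cases hu2 : u = v 2
      · subst hu2
        rw [hs2]
        apply cnp_of_compl _ _ 1 3 (by omega)
        intro w
        have e12 : (1 : ZMod n) + 1 = 2 := by norm_num
        have e13 : (1 : ZMod n) + 2 = 3 := by norm_num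
        rw [mapAdj, hsym3, hAdj, hval3, e12, e13, ← hw1 w, ← hw3 w, ← hw2 w, ne_comm]
        simp only [Sym2.eq_iff, v.injective.eq_iff, Fin.reduceEq]
        tauto
      · -- generic vertex
        apply cnp_of_compl _ _ (σ u) 1 (by omega)
        intro w
        rw [mapAdj, σ.symm_apply_apply, hAdj]
        have h1 : (w - σ u).val < 1 ↔ w = σ u := by
          rw [Nat.lt_one_iff, ZMod.val_eq_zero, sub_eq_zero]
        have h2 : (u = σ.symm w) ↔ w = σ u := by rw [Equiv.eq_symm_apply, eq_comm]
        rw [h1, ← h2]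
        simp only [Sym2.eq_iff]
        constructor
        · rintro ⟨hne, -⟩
          exact hne
        · intro hne
          refine ⟨hne, ?_⟩
          rintro ((⟨h, -⟩ | ⟨h, -⟩) | (⟨h, -⟩ | ⟨h, -⟩) | (⟨h, -⟩ | ⟨h, -⟩) |
            (⟨h, -⟩ | ⟨h, -⟩)) <;>
            first
              | exact hu0 h
              | exact hu1 h
              | exact hu2 h
              | exact hu3 h
  have hadj13 : G.Adj (v 1) (v 3) := by
    rw [hAdj]
    refine ⟨hvne 1 3 (by decide), ?_⟩
    simp [Sym2.eq_iff, v.injective.eq_iff]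
  refine ⟨σ, hCNP, hadj13, ?_⟩
  intro x y hxy hnadj
  have hmem : s(x,y) = s(v 0, v 1) ∨ s(x,y) = s(v 1, v 2) ∨ s(x,y) = s(v 2, v 3) ∨
      s(x,y) = s(v 3, v 0) := by
    by_contra h
    exact hnadj ((hAdj x y).mpr ⟨hxy, h⟩)
  simp only [Sym2.eq_iff] at hmem
  have c0 : CNP (G.map σ.toEmbedding) (σ (v 0)) :=
    hCNP _ (hvne 0 1 (by decide)) (hvne 0 3 (by decide))
  have c2 : CNP (G.map σ.toEmbedding) (σ (v 2)) :=
    hCNP _ (hvne 2 1 (by decide)) (hvne 2 3 (by decide))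
  rcases hmem with (⟨hx, hy⟩ | ⟨hx, hy⟩) | (⟨hx, hy⟩ | ⟨hx, hy⟩) |
    (⟨hx, hy⟩ | ⟨hx, hy⟩) | (⟨hx, hy⟩ | ⟨hx, hy⟩)
  · exact ⟨x, Or.inl rfl, hx ▸ c0⟩
  · exact ⟨y, Or.inr rfl, hy ▸ c0⟩
  · exact ⟨y, Or.inr rfl, hy ▸ c2⟩
  · exact ⟨x, Or.inl rfl, hx ▸ c2⟩
  · exact ⟨x, Or.inl rfl, hx ▸ c2⟩
  · exact ⟨y, Or.inr rfl, hy ▸ c2⟩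
  · exact ⟨y, Or.inr rfl, hy ▸ c0⟩
  · exact ⟨x, Or.inl rfl, hx ▸ c0⟩
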